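/- Let (C, d) be a metric space, Q : C → ℝ the optimal value function of the deterministic discounted control problem Q(c) = sup_{strategies} Σ_t γ^t r(c_t) with c_t+1 = (Φ(c_t), h_t), where r is L_r-Lipschitz and Φ is L_Φ-Lipschitz with γ L_Φ < 1. Then Q is Lipschitz continuous with constant L_r/(1 − γ L_Φ); in particular |Q(c) − Q(c')| ≤ L_r/(1−γL_Φ) · d(c,c'). -/

import Mathlib

noncomputable section

/-- Deterministic controlled trajectory: μ_{t+1} = Φ(μ_t, h_t), μ_0 = μ0. -/
def traj {S H : Type*} (Φ : S → H → S) (μ0 : S) (hs : ℕ → H) : ℕ → S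
  | 0 => μ0
  | n + 1 => Φ (traj Φ μ0 hs n) (hs n)

/-- Optimal Q-function on the lifted state-action space C = S × H, with the
    first action fixed to c.2. -/
def Qopt {S H : Type*} (Φ : S × H → S) (r : S × H → ℝ) (γ : ℝ) (c : S × H) : ℝ :=
  ⨆ hs : {hs : ℕ → H // hs 0 = c.2},
    ∑' t, γ ^ t * r (traj (fun s h => Φ (s, h)) c.1 hs t, (hs : ℕ → H) t)

/-- Lipschitz continuity of the optimal Q-function: if r is L_r-Lipschitz
    and Φ is L_Φ-Lipschitz for the metric d_C(c,c') = dist(c.1,c'.1) + dist(c.2,c'.2),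
    and γ L_Φ < 1, then |Q(c) − Q(c')| ≤ L_r/(1 − γ L_Φ) · d_C(c,c'). -/
theorem Q_lipschitz {S H : Type*} [PseudoMetricSpace S] [PseudoMetricSpace H]
    (Φ : S × H → S) (r : S × H → ℝ) (γ Lr LΦ R : ℝ)
    (hγ0 : 0 < γ) (hγ1 : γ < 1) (hγLΦ : γ * LΦ < 1)
    (hRbd : ∀ c, |r c| ≤ R)
    (hr : ∀ c c', |r c - r c'| ≤ Lr * (dist c.1 c'.1 + dist c.2 c'.2))
    (hΦ : ∀ c c', dist (Φ c) (Φ c') ≤ LΦ * (dist c.1 c'.1 + dist c.2 c'.2)) :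
    ∀ c c' : S × H,
      |Qopt Φ r γ c - Qopt Φ r γ c'| ≤
        Lr / (1 - γ * LΦ) * (dist c.1 c'.1 + dist c.2 c'.2) := by
  intro c c'
  have hγ0' : (0:ℝ) ≤ γ := hγ0.le
  have hγabs : |γ| < 1 := by rw [abs_of_nonneg hγ0']; exact hγ1
  set F : S → H → S := fun s h => Φ (s, h) with hF
  -- nonempty strategy sets
  have hne : ∀ x : S × H, Nonempty {hs : ℕ → H // hs 0 = x.2} :=
    fun x => ⟨⟨fun _ => x.2, rfl⟩⟩
  -- summability of the discounted reward series
  have hsum : ∀ (s : S) (hs : ℕ → H),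
      Summable (fun t => γ ^ t * r (traj F s hs t, hs t)) := by
    intro s hs
    apply Summable.of_norm_bounded (g := fun t => R * γ ^ t)
      ((summable_geometric_of_lt_one hγ0' hγ1).mul_left R)
    intro t
    rw [Real.norm_eq_abs, abs_mul, abs_pow, abs_of_nonneg hγ0', mul_comm]
    exact mul_le_mul_of_nonneg_right (hRbd _) (pow_nonneg hγ0' t)
  by_cases hdeg : ∀ a b : S × H, dist a.1 b.1 + dist a.2 b.2 = 0
  · -- degenerate case: everything at distance 0, r is constant
    have hrc : ∀ a b : S × H, r a = r b := by
      intro a b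
      have h0 := hr a b
      rw [hdeg a b, mul_zero] at h0
      have : r a - r b = 0 := abs_eq_zero.mp (le_antisymm h0 (abs_nonneg _))
      linarith
    have hQ : ∀ a : S × H, Qopt Φ r γ a = ∑' t : ℕ, γ ^ t * r c := by
      intro a
      have hconst : ∀ (hs : {hs : ℕ → H // hs 0 = a.2}),
          (∑' t, γ ^ t * r (traj F a.1 hs t, (hs : ℕ → H) t)) = ∑' t : ℕ, γ ^ t * r c := by
        intro hs
        congr 1
        funext t
        rw [hrc (traj F a.1 hs t, (hs : ℕ → H) t) c]
      unfold Qopt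
      haveI := hne a
      rw [show (fun hs : {hs : ℕ → H // hs 0 = a.2} =>
          ∑' t, γ ^ t * r (traj F a.1 hs t, (hs : ℕ → H) t))
        = fun _ => ∑' t : ℕ, γ ^ t * r c from funext hconst]
      exact ciSup_const
    rw [hQ c, hQ c', sub_self, abs_zero, hdeg c c', mul_zero]
  · -- nondegenerate: some pair at positive distance, hence Lr, LΦ ≥ 0
    push_neg at hdeg
    obtain ⟨a₀, b₀, hD0⟩ := hdeg
    have hDpos : 0 < dist a₀.1 b₀.1 + dist a₀.2 b₀.2 :=
      lt_of_le_of_ne (by positivity) (Ne.symm hD0)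
    have hLr : 0 ≤ Lr := by
      by_contra h
      push_neg at h
      have := hr a₀ b₀
      nlinarith [abs_nonneg (r a₀ - r b₀)]
    have hLΦ : 0 ≤ LΦ := by
      by_contra h
      push_neg at h
      have := hΦ a₀ b₀
      nlinarith [dist_nonneg (x := Φ a₀) (y := Φ b₀)]
    have hγLΦ0 : 0 ≤ γ * LΦ := mul_nonneg hγ0' hLΦ
    have h1 : 0 < 1 - γ * LΦ := by linarith
    -- boundedness above of the sup family
    have hbdd : ∀ x : S × H, BddAbove (Set.range fun hs : {hs : ℕ → H // hs 0 = x.2} =>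
        ∑' t, γ ^ t * r (traj F x.1 hs t, (hs : ℕ → H) t)) := by
      intro x
      refine ⟨R * (1 - γ)⁻¹, ?_⟩
      rintro _ ⟨hs, rfl⟩
      calc (∑' t, γ ^ t * r (traj F x.1 hs t, (hs : ℕ → H) t))
          ≤ ∑' t : ℕ, R * γ ^ t := by
            apply Summable.tsum_le_tsum _ (hsum x.1 hs)
              ((summable_geometric_of_lt_one hγ0' hγ1).mul_left R)
            intro t
            rw [mul_comm R]
            exact mul_le_mul_of_nonneg_left
              (le_trans (le_abs_self _) (hRbd _)) (pow_nonneg hγ0' t)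
        _ = R * (1 - γ)⁻¹ := by
            rw [tsum_mul_left, tsum_geometric_of_lt_one hγ0' hγ1]
    -- one-sided key estimate
    have key : ∀ a b : S × H, Qopt Φ r γ a ≤ Qopt Φ r γ b +
        Lr / (1 - γ * LΦ) * (dist a.1 b.1 + dist a.2 b.2) := by
      intro a b
      set D := dist a.1 b.1 + dist a.2 b.2 with hDdef
      have hDnn : 0 ≤ D := by positivity
      unfold Qopt
      haveI := hne a
      apply ciSup_le
      rintro ⟨hs, hhs⟩
      set hs' : ℕ → H := Function.update hs 0 b.2 with hhs'
      have hhs'0 : hs' 0 = b.2 := Function.update_self 0 b.2 hs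
      have hhs'succ : ∀ t : ℕ, hs' (t + 1) = hs (t + 1) := fun t =>
        Function.update_of_ne (Nat.succ_ne_zero t) b.2 hs
      -- distance along the coupled trajectories
      have hδ : ∀ t, dist (traj F a.1 hs t) (traj F b.1 hs' t) + dist (hs t) (hs' t)
          ≤ LΦ ^ t * D := by
        intro t
        induction t with
        | zero =>
          simp only [traj, pow_zero, one_mul, hhs'0, hhs]
          rfl
        | succ n ih =>
          have hstep : dist (traj F a.1 hs (n+1)) (traj F b.1 hs' (n+1))
              ≤ LΦ * (LΦ ^ n * D) := by
            calc dist (traj F a.1 hs (n+1)) (traj F b.1 hs' (n+1))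
                = dist (Φ (traj F a.1 hs n, hs n)) (Φ (traj F b.1 hs' n, hs' n)) := rfl
              _ ≤ LΦ * (dist (traj F a.1 hs n) (traj F b.1 hs' n) + dist (hs n) (hs' n)) :=
                  hΦ _ _
              _ ≤ LΦ * (LΦ ^ n * D) := mul_le_mul_of_nonneg_left ih hLΦ
          have hact : dist (hs (n+1)) (hs' (n+1)) = 0 := by
            rw [hhs'succ n, dist_self]
          rw [hact, add_zero, pow_succ, mul_comm (LΦ ^ n) LΦ, mul_assoc]
          exact hstep
      -- per-term estimate
      have hterm : ∀ t, |γ ^ t * r (traj F a.1 hs t, hs t)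
          - γ ^ t * r (traj F b.1 hs' t, hs' t)| ≤ Lr * D * (γ * LΦ) ^ t := by
        intro t
        rw [← mul_sub, abs_mul, abs_pow, abs_of_nonneg hγ0', mul_pow]
        calc γ ^ t * |r (traj F a.1 hs t, hs t) - r (traj F b.1 hs' t, hs' t)|
            ≤ γ ^ t * (Lr * (LΦ ^ t * D)) := by
              apply mul_le_mul_of_nonneg_left _ (pow_nonneg hγ0' t)
              exact le_trans (hr _ _) (mul_le_mul_of_nonneg_left (hδ t) hLr)
          _ = Lr * D * (γ ^ t * LΦ ^ t) := by ring
      have hsumbd : Summable (fun t : ℕ => Lr * D * (γ * LΦ) ^ t) :=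
        (summable_geometric_of_lt_one hγLΦ0 hγLΦ).mul_left _
      have hdiff : (∑' t, γ ^ t * r (traj F a.1 hs t, hs t))
          - (∑' t, γ ^ t * r (traj F b.1 hs' t, hs' t))
          ≤ Lr / (1 - γ * LΦ) * D := by
        rw [← Summable.tsum_sub (hsum a.1 hs) (hsum b.1 hs')]
        calc (∑' t, (γ ^ t * r (traj F a.1 hs t, hs t)
              - γ ^ t * r (traj F b.1 hs' t, hs' t)))
            ≤ ∑' t : ℕ, Lr * D * (γ * LΦ) ^ t := by
              apply Summable.tsum_le_tsum _ ((hsum a.1 hs).sub (hsum b.1 hs')) hsumbd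
              intro t
              exact le_trans (le_abs_self _) (hterm t)
          _ = Lr * D * (1 - γ * LΦ)⁻¹ := by
              rw [tsum_mul_left, tsum_geometric_of_lt_one hγLΦ0 hγLΦ]
          _ = Lr / (1 - γ * LΦ) * D := by ring
      have hle : (∑' t, γ ^ t * r (traj F b.1 hs' t, hs' t))
          ≤ ⨆ g : {g : ℕ → H // g 0 = b.2},
            ∑' t, γ ^ t * r (traj F b.1 g t, (g : ℕ → H) t) :=
        le_ciSup (hbdd b) ⟨hs', hhs'0⟩
      linarith
    rw [abs_sub_le_iff]
    constructor
    · linarith [key c c']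
    · have := key c' c
      rw [dist_comm c'.1 c.1, dist_comm c'.2 c.2] at this
      linarith

end
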